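/- Let $V$ be a finite-dimensional vector space over $\mathbb{Q}$ and $V_0,\ldots,V_r \subseteq V$ subspaces. Let $K \subseteq V_0 \oplus \cdots \oplus V_r$ be the kernel of the summation map $(m_0,\ldots,m_r) \mapsto \sum_i m_i$, and define $\alpha(V_0,\ldots,V_r) = \max\{\dim \langle m_0,\ldots,m_r\rangle \mid (m_0,\ldots,m_r) \in K\}$. Then $\alpha(V_0,\ldots,V_r) = \alpha((V_0)_{\mathbb{C}},\ldots,(V_r)_{\mathbb{C}})$, where $(V_i)_{\mathbb{C}} = V_i \otimes_{\mathbb{Q}} \mathbb{C}$ are viewed as subspaces of $V_{\mathbb{C}} = V \otimes_{\mathbb{Q}} \mathbb{C}$. -/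

import Mathlib

open Module TensorProduct

/-- The dimension of the span of a finite family of vectors. -/
noncomputable def spanDim (k : Type*) {V : Type*} [DivisionRing k] [AddCommGroup V] [Module k V]
    {r : ℕ} (m : Fin (r + 1) → V) : ℕ :=
  finrank k (Submodule.span k (Set.range m))

/-- The kernel `K` of the summation map `V₀ ⊕ ⋯ ⊕ V_r → V`, realized inside `Π i, V`. -/
noncomputable def kerSum (k : Type*) {V : Type*} [Field k] [AddCommGroup V] [Module k V]
    {r : ℕ} (Vs : Fin (r + 1) → Submodule k V) : Submodule k (Fin (r + 1) → V) :=
  (⨅ i, (Vs i).comap (LinearMap.proj i)) ⊓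
    LinearMap.ker (∑ i, (LinearMap.proj i : (Fin (r + 1) → V) →ₗ[k] V))

/-- The invariant `α(V₀,…,V_r)`: the maximum of `dim ⟨m₀,…,m_r⟩` over `(m₀,…,m_r) ∈ K`. -/
noncomputable def alphaInvariant (k : Type*) {V : Type*} [Field k] [AddCommGroup V] [Module k V]
    {r : ℕ} (Vs : Fin (r + 1) → Submodule k V) : ℕ :=
  sSup { d | ∃ m ∈ kerSum k Vs, spanDim k m = d }

section Aux1

variable {F : Type*} [Field F] {W : Type*} [AddCommGroup W] [Module F W]

lemma exists_linearIndependent_comp {ι : Type*} [Fintype ι] (v : ι → W) (d : ℕ)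
    (hd : d ≤ finrank F (Submodule.span F (Set.range v))) :
    ∃ τ : Fin d → ι, LinearIndependent F (v ∘ τ) := by
  obtain ⟨b, hb_sub, hb_span, hb_ind⟩ := exists_linearIndependent F (Set.range v)
  have hfin : b.Finite := (Set.finite_range v).subset hb_sub
  haveI := hfin.fintype
  have hcard : d ≤ Fintype.card b := by
    have h1 : finrank F (Submodule.span F b) = b.toFinset.card :=
      finrank_span_set_eq_card hb_ind
    rw [hb_span] at h1
    rw [Set.toFinset_card] at h1
    omega
  have hemb : Nonempty (Fin d ↪ b) := by
    apply Function.Embedding.nonempty_of_card_le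
    simpa using hcard
  obtain ⟨emb⟩ := hemb
  choose pre hpre using fun x : b => hb_sub x.2
  refine ⟨fun i => pre (emb i), ?_⟩
  have heq : v ∘ (fun i => pre (emb i)) = fun i => ((emb i : W)) :=
    funext fun i => hpre (emb i)
  rw [heq]
  exact hb_ind.comp emb emb.injective

lemma linearIndependent_iff_exists_det {ι : Type*} [Fintype ι] [DecidableEq ι]
    (e : Basis ι F W) {d : ℕ} (w : Fin d → W) :
    LinearIndependent F w ↔
      ∃ τ : Fin d → ι, (Matrix.of fun a b => e.repr (w a) (τ b)).det ≠ 0 := by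
  constructor
  · intro h
    set A : Matrix (Fin d) ι F := Matrix.of fun a t => e.repr (w a) t with hA
    have hrows : LinearIndependent F (fun a => A a) := by
      have heq : (fun a => A a) = ⇑e.equivFun ∘ w := by
        funext a; ext t; simp [hA, Basis.equivFun_apply]
      rw [heq]
      exact h.map' e.equivFun.toLinearMap e.equivFun.ker
    have hrank : A.rank = d := by
      simpa using hrows.rank_matrix
    have hspan : d ≤ finrank F (Submodule.span F (Set.range A.transpose)) := by
      rw [show Set.range A.transpose = Set.range A.col from rfl, ← Matrix.rank_eq_finrank_span_cols, hrank]
    obtain ⟨τ, hτ⟩ := exists_linearIndependent_comp A.transpose d hspan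
    refine ⟨τ, ?_⟩
    have hunit : IsUnit (A.submatrix id τ) := by
      apply Matrix.linearIndependent_cols_iff_isUnit.mp
      exact hτ
    have hdet := (Matrix.isUnit_iff_isUnit_det _).mp hunit
    exact (isUnit_iff_ne_zero.mp hdet)
  · rintro ⟨τ, hdet⟩
    have hunit : IsUnit (Matrix.of fun a b => e.repr (w a) (τ b) : Matrix (Fin d) (Fin d) F) :=
      (Matrix.isUnit_iff_isUnit_det _).2 (isUnit_iff_ne_zero.2 hdet)
    have hrows := Matrix.linearIndependent_rows_iff_isUnit.mpr hunit
    have heq : (fun a => (Matrix.of fun a b => e.repr (w a) (τ b) : Matrix (Fin d) (Fin d) F) a)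
        = ⇑((LinearMap.funLeft F F τ).comp e.equivFun.toLinearMap) ∘ w := by
      funext a; ext t
      simp [Basis.equivFun_apply, LinearMap.funLeft]
    change LinearIndependent F (fun a => (Matrix.of fun a b => e.repr (w a) (τ b) : Matrix (Fin d) (Fin d) F) a) at hrows
    rw [heq] at hrows
    exact LinearIndependent.of_comp _ hrows

end Aux1

section Aux2

lemma mem_kerSum {k : Type*} [Field k] {V : Type*} [AddCommGroup V] [Module k V]
    {r : ℕ} {Vs : Fin (r + 1) → Submodule k V} {m : Fin (r + 1) → V} :
    m ∈ kerSum k Vs ↔ (∀ i, m i ∈ Vs i) ∧ ∑ i, m i = 0 := by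
  simp [kerSum, Submodule.mem_iInf, LinearMap.mem_ker, LinearMap.sum_apply]

lemma finrank_kerSum_add (k : Type*) [Field k] {V : Type*} [AddCommGroup V] [Module k V]
    [FiniteDimensional k V] {r : ℕ} (Vs : Fin (r + 1) → Submodule k V) :
    finrank k (kerSum k Vs) + finrank k ↥(⨆ i, Vs i) = ∑ i, finrank k (Vs i) := by
  classical
  let g : ((i : Fin (r + 1)) → Vs i) →ₗ[k] V :=
    ∑ i, (Vs i).subtype.comp (LinearMap.proj i)
  have hg_apply : ∀ x, g x = ∑ i, ((x i : V)) := by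
    intro x
    simp [g, LinearMap.sum_apply]
  have hrange : LinearMap.range g = ⨆ i, Vs i := by
    apply le_antisymm
    · rintro _ ⟨x, rfl⟩
      rw [hg_apply]
      exact Submodule.sum_mem _ fun i _ => Submodule.mem_iSup_of_mem i (x i).2
    · refine iSup_le fun i v hv => ?_
      refine ⟨Pi.single i ⟨v, hv⟩, ?_⟩
      rw [hg_apply, Finset.sum_eq_single i]
      · simp
      · intro j _ hj
        rw [Pi.single_eq_of_ne hj]
        rfl
      · simp
  let Φ : ((i : Fin (r + 1)) → Vs i) →ₗ[k] (Fin (r + 1) → V) :=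
    LinearMap.pi fun i => (Vs i).subtype.comp (LinearMap.proj i)
  have hmem : ∀ x ∈ LinearMap.ker g, Φ x ∈ kerSum k Vs := by
    intro x hx
    rw [mem_kerSum]
    refine ⟨fun i => (x i).2, ?_⟩
    have hx' : g x = 0 := hx
    rw [hg_apply] at hx'
    exact hx'
  let Ψ : LinearMap.ker g →ₗ[k] kerSum k Vs :=
    (Φ.comp (LinearMap.ker g).subtype).codRestrict _ fun x => hmem x x.2
  have hbij : Function.Bijective Ψ := by
    constructor
    · intro x y hxy
      ext i
      exact congrFun (congrArg (fun z : kerSum k Vs => (z : Fin (r + 1) → V)) hxy) i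
    · rintro ⟨m, hm⟩
      rw [mem_kerSum] at hm
      refine ⟨⟨fun i => ⟨m i, hm.1 i⟩, ?_⟩, ?_⟩
      · rw [LinearMap.mem_ker, hg_apply]
        exact hm.2
      · ext i
        rfl
  have hker : finrank k (LinearMap.ker g) = finrank k (kerSum k Vs) :=
    (LinearEquiv.ofBijective Ψ hbij).finrank_eq
  have hrn := LinearMap.finrank_range_add_finrank_ker g
  have hpi : finrank k ((i : Fin (r + 1)) → Vs i) = ∑ i, finrank k (Vs i) :=
    Module.finrank_pi_fintype k
  rw [hrange, hpi] at hrn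
  omega

lemma linearIndependent_algebraMap_repr {ι : Type*} [Fintype ι] [DecidableEq ι]
    {W W' : Type*} [AddCommGroup W] [Module ℚ W] [AddCommGroup W'] [Module ℂ W']
    (eQ : Basis ι ℚ W) (eC : Basis ι ℂ W') (φ : W → W')
    (hφ : ∀ w t, eC.repr (φ w) t = algebraMap ℚ ℂ (eQ.repr w t))
    {N : ℕ} {x : Fin N → W} (hx : LinearIndependent ℚ x) :
    LinearIndependent ℂ (φ ∘ x) := by
  obtain ⟨τ, hτ⟩ := (linearIndependent_iff_exists_det eQ x).1 hx
  refine (linearIndependent_iff_exists_det eC (φ ∘ x)).2 ⟨τ, ?_⟩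
  have hmat : (Matrix.of fun a b => eC.repr ((φ ∘ x) a) (τ b))
      = (Matrix.of fun a b => eQ.repr (x a) (τ b)).map (algebraMap ℚ ℂ) := by
    ext a b
    simp [Matrix.map_apply, hφ, Function.comp]
  rw [hmat, ← RingHom.mapMatrix_apply, ← RingHom.map_det]
  intro h
  exact hτ ((algebraMap ℚ ℂ).injective (h.trans (map_zero _).symm))

lemma baseChange_iSup' {V : Type*} [AddCommGroup V] [Module ℚ V] {r : ℕ}
    (p : Fin (r + 1) → Submodule ℚ V) :
    (⨆ i, p i).baseChange ℂ = ⨆ i, (p i).baseChange ℂ := by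
  have h : ∀ q : Submodule ℚ V,
      q.baseChange ℂ = Submodule.span ℂ (⇑(TensorProduct.mk ℚ ℂ V 1) '' (q : Set V)) := by
    intro q
    rw [Submodule.baseChange_eq_span, Submodule.map_coe]
  rw [Submodule.iSup_eq_span, Submodule.baseChange_span, Set.image_iUnion, Submodule.span_iUnion]
  exact iSup_congr fun i => (h (p i)).symm

lemma finrank_baseChange_submodule {V : Type*} [AddCommGroup V] [Module ℚ V]
    [FiniteDimensional ℚ V] (p : Submodule ℚ V) :
    finrank ℂ (p.baseChange ℂ) = finrank ℚ p := by
  classical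
  let e := Module.finBasis ℚ V
  let bp := Module.finBasis ℚ p
  set t := finrank ℚ p with ht
  let v : Fin t → V := fun j => (bp j : V)
  have hv_ind : LinearIndependent ℚ v := bp.linearIndependent.map' p.subtype p.ker_subtype
  have hv_span : Submodule.span ℚ (Set.range v) = p := by
    have hr : Set.range v = p.subtype '' Set.range bp := by
      rw [← Set.range_comp]; rfl
    rw [hr, Submodule.span_image, bp.span_eq, Submodule.map_subtype_top]
  have hC_ind : LinearIndependent ℂ ((fun w => (1 : ℂ) ⊗ₜ[ℚ] w) ∘ v) := by
    refine linearIndependent_algebraMap_repr e (e.baseChange ℂ)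
      (fun w => (1 : ℂ) ⊗ₜ[ℚ] w) (fun w s => ?_) hv_ind
    rw [Basis.baseChange_repr_tmul]
    rw [Algebra.algebraMap_eq_smul_one]
  have hpb : p.baseChange ℂ
      = Submodule.span ℂ (Set.range ((fun w => (1 : ℂ) ⊗ₜ[ℚ] w) ∘ v)) := by
    rw [← hv_span, Submodule.baseChange_span]
    congr 1
    rw [Set.range_comp]
    rfl
  rw [hpb, finrank_span_eq_card hC_ind, Fintype.card_fin]

end Aux2

/-- `α` does not change under base change from `ℚ` to `ℂ`. -/
theorem stmt1 {V : Type*} [AddCommGroup V] [Module ℚ V] [FiniteDimensional ℚ V]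
    {r : ℕ} (Vs : Fin (r + 1) → Submodule ℚ V) :
    alphaInvariant ℚ Vs = alphaInvariant ℂ (fun i => (Vs i).baseChange ℂ) := by
  classical
  let e : Basis (Fin (finrank ℚ V)) ℚ V := Module.finBasis ℚ V
  let eC : Basis (Fin (finrank ℚ V)) ℂ (ℂ ⊗[ℚ] V) := e.baseChange ℂ
  haveI : FiniteDimensional ℂ (ℂ ⊗[ℚ] V) := Module.Finite.of_basis eC
  have bddQ : BddAbove { d | ∃ m ∈ kerSum ℚ Vs, spanDim ℚ m = d } := by
    refine ⟨finrank ℚ V, ?_⟩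
    rintro d ⟨m, -, rfl⟩
    exact Submodule.finrank_le _
  have bddC : BddAbove { d | ∃ m ∈ kerSum ℂ (fun i => (Vs i).baseChange ℂ),
      spanDim ℂ m = d } := by
    refine ⟨finrank ℂ (ℂ ⊗[ℚ] V), ?_⟩
    rintro d ⟨m, -, rfl⟩
    exact Submodule.finrank_le _
  have hneQ : { d | ∃ m ∈ kerSum ℚ Vs, spanDim ℚ m = d }.Nonempty :=
    ⟨_, 0, zero_mem _, rfl⟩
  have hneC : { d | ∃ m ∈ kerSum ℂ (fun i => (Vs i).baseChange ℂ),
      spanDim ℂ m = d }.Nonempty := ⟨_, 0, zero_mem _, rfl⟩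
  apply le_antisymm
  · -- easy direction
    apply csSup_le hneQ
    rintro d ⟨m, hm, rfl⟩
    apply le_csSup bddC
    rw [mem_kerSum] at hm
    refine ⟨fun i => (1 : ℂ) ⊗ₜ[ℚ] m i, ?_, ?_⟩
    · rw [mem_kerSum]
      refine ⟨fun i => Submodule.tmul_mem_baseChange_of_mem 1 (hm.1 i), ?_⟩
      rw [← TensorProduct.tmul_sum, hm.2, TensorProduct.tmul_zero]
    · show finrank ℂ (Submodule.span ℂ (Set.range fun i => (1 : ℂ) ⊗ₜ[ℚ] m i)) = spanDim ℚ m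
      have h1 : (Set.range fun i => (1 : ℂ) ⊗ₜ[ℚ] m i)
          = ⇑(TensorProduct.mk ℚ ℂ V 1) '' Set.range m := by
        rw [← Set.range_comp]; rfl
      rw [h1, ← Submodule.baseChange_span, finrank_baseChange_submodule]
      rfl
  · -- hard direction
    apply csSup_le hneC
    rintro d ⟨M, hM, rfl⟩
    set s := finrank ℚ (kerSum ℚ Vs) with hs
    let b : Basis (Fin s) ℚ (kerSum ℚ Vs) := Module.finBasis ℚ _
    let g : Fin s → (Fin (r + 1) → ℂ ⊗[ℚ] V) :=
      fun j i => (1 : ℂ) ⊗ₜ[ℚ] ((b j : Fin (r + 1) → V) i)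
    have hg_mem : ∀ j, g j ∈ kerSum ℂ (fun i => (Vs i).baseChange ℂ) := by
      intro j
      have hbj := mem_kerSum.1 (b j).2
      rw [mem_kerSum]
      refine ⟨fun i => Submodule.tmul_mem_baseChange_of_mem 1 (hbj.1 i), ?_⟩
      show (∑ i, (1 : ℂ) ⊗ₜ[ℚ] ((b j : Fin (r + 1) → V) i)) = 0
      rw [← TensorProduct.tmul_sum, hbj.2, TensorProduct.tmul_zero]
    have hx_ind : LinearIndependent ℚ (fun j => ((b j : Fin (r + 1) → V))) :=
      b.linearIndependent.map' (kerSum ℚ Vs).subtype (kerSum ℚ Vs).ker_subtype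
    have hg_ind : LinearIndependent ℂ g := by
      have h := linearIndependent_algebraMap_repr
        (Pi.basis fun _ : Fin (r + 1) => e) (Pi.basis fun _ : Fin (r + 1) => eC)
        (fun w i => (1 : ℂ) ⊗ₜ[ℚ] w i)
        (fun w t => by
          rcases t with ⟨i, t⟩
          rw [Pi.basis_repr, Pi.basis_repr]
          rw [Basis.baseChange_repr_tmul, Algebra.algebraMap_eq_smul_one])
        hx_ind
      exact h
    have hspan_g : Submodule.span ℂ (Set.range g)
        = kerSum ℂ (fun i => (Vs i).baseChange ℂ) := by
      apply Submodule.eq_of_le_of_finrank_le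
      · rw [Submodule.span_le]
        rintro _ ⟨j, rfl⟩
        exact hg_mem j
      · have h1 : finrank ℂ (Submodule.span ℂ (Set.range g)) = s := by
          rw [finrank_span_eq_card hg_ind, Fintype.card_fin]
        have hAQ := finrank_kerSum_add ℚ Vs
        have hAC := finrank_kerSum_add ℂ (fun i => (Vs i).baseChange ℂ)
        have hsum : ∑ i, finrank ℂ ((Vs i).baseChange ℂ) = ∑ i, finrank ℚ (Vs i) :=
          Finset.sum_congr rfl fun i _ => finrank_baseChange_submodule (Vs i)
        have hsup : finrank ℂ ↥(⨆ i, (Vs i).baseChange ℂ) = finrank ℚ ↥(⨆ i, Vs i) := by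
          rw [← baseChange_iSup']
          exact finrank_baseChange_submodule _
        rw [h1]
        omega
    rw [← hspan_g] at hM
    obtain ⟨c, hc⟩ := (Submodule.mem_span_range_iff_exists_fun ℂ).1 hM
    obtain ⟨ι, hι⟩ := exists_linearIndependent_comp M (spanDim ℂ M) (le_of_eq rfl)
    obtain ⟨τ, hτ⟩ := (linearIndependent_iff_exists_det eC (M ∘ ι)).1 hι
    have hrepr : ∀ i t', eC.repr (M i) t'
        = ∑ j, c j * algebraMap ℚ ℂ (e.repr ((b j : Fin (r + 1) → V) i) t') := by
      intro i t'
      have h1 : M i = ∑ j, c j • ((1 : ℂ) ⊗ₜ[ℚ] ((b j : Fin (r + 1) → V) i)) := by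
        rw [← hc, Finset.sum_apply]
        exact Finset.sum_congr rfl fun j _ => rfl
      rw [h1, map_sum, Finsupp.finset_sum_apply]
      refine Finset.sum_congr rfl fun j _ => ?_
      rw [map_smul, Finsupp.smul_apply, Basis.baseChange_repr_tmul, smul_eq_mul,
        Algebra.algebraMap_eq_smul_one]
    set Pm : Matrix (Fin (spanDim ℂ M)) (Fin (spanDim ℂ M)) (MvPolynomial (Fin s) ℚ) :=
      Matrix.of fun a b' => ∑ j,
        MvPolynomial.C (e.repr ((b j : Fin (r + 1) → V) (ι a)) (τ b')) * MvPolynomial.X j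
      with hPm
    have hPc : (MvPolynomial.aeval c) Pm.det
        = (Matrix.of fun a b' => eC.repr ((M ∘ ι) a) (τ b')).det := by
      rw [AlgHom.map_det]
      congr 1
      ext a b'
      simp only [hPm, AlgHom.mapMatrix_apply, Matrix.map_apply, Matrix.of_apply, map_sum, map_mul,
        MvPolynomial.aeval_C, MvPolynomial.aeval_X, Function.comp_apply, hrepr]
      exact Finset.sum_congr rfl fun j _ => mul_comm _ _
    have hPne : Pm.det ≠ 0 := by
      intro h0
      rw [h0, map_zero] at hPc
      exact hτ hPc.symm
    obtain ⟨c', hc'⟩ : ∃ c' : Fin s → ℚ, MvPolynomial.eval c' Pm.det ≠ 0 := by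
      by_contra h
      push_neg at h
      exact hPne (MvPolynomial.funext fun x => by rw [h x, map_zero])
    set m' : Fin (r + 1) → V := ((∑ j, c' j • b j : kerSum ℚ Vs) : Fin (r + 1) → V) with hm'
    have hm'K : m' ∈ kerSum ℚ Vs := (∑ j, c' j • b j : kerSum ℚ Vs).2
    have hm'_app : ∀ i, m' i = ∑ j, c' j • ((b j : Fin (r + 1) → V) i) := by
      intro i
      rw [hm']
      rw [show ((∑ j, c' j • b j : kerSum ℚ Vs) : Fin (r + 1) → V)
        = ∑ j, c' j • ((b j : kerSum ℚ Vs) : Fin (r + 1) → V) by push_cast; rfl]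
      rw [Finset.sum_apply]
      rfl
    have hrepr' : ∀ i t', e.repr (m' i) t'
        = ∑ j, c' j * e.repr ((b j : Fin (r + 1) → V) i) t' := by
      intro i t'
      rw [hm'_app, map_sum, Finsupp.finset_sum_apply]
      exact Finset.sum_congr rfl fun j _ => by rw [map_smul, Finsupp.smul_apply, smul_eq_mul]
    have hdet' : (Matrix.of fun a b' => e.repr ((m' ∘ ι) a) (τ b')).det
        = MvPolynomial.eval c' Pm.det := by
      rw [RingHom.map_det]
      congr 1
      ext a b'
      simp only [hPm, RingHom.mapMatrix_apply, Matrix.map_apply, Matrix.of_apply, map_sum, map_mul,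
        MvPolynomial.eval_C, MvPolynomial.eval_X, Function.comp_apply, hrepr']
      exact Finset.sum_congr rfl fun j _ => mul_comm _ _
    have hind' : LinearIndependent ℚ (m' ∘ ι) :=
      (linearIndependent_iff_exists_det e (m' ∘ ι)).2 ⟨τ, by rw [hdet']; exact hc'⟩
    have hdle : spanDim ℂ M ≤ spanDim ℚ m' := by
      have h2 : finrank ℚ (Submodule.span ℚ (Set.range (m' ∘ ι))) = spanDim ℂ M := by
        rw [finrank_span_eq_card hind', Fintype.card_fin]
      rw [← h2]
      exact Submodule.finrank_mono
        (Submodule.span_mono (Set.range_comp_subset_range ι m'))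
    exact hdle.trans (le_csSup bddQ ⟨m', hm'K, rfl⟩)
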